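/- Fix λ > 0, α > 2, θ > 0, p_t > 0, σ² ≥ 0, γ ∈ (0,1) and an integer j ≥ 1. Define G(r) = 2πλ r^{2−α}/(α−2) and s(r) = (θ/p_t)(p_t G(r) + σ²) for r > 0, and let μ_j be the measure on the ordered simplex {0 < r₀ < r₁ < ⋯ < r_j} ⊂ ℝ^{j+1} with density (2πλ)^{j+1} r₀ r₁ ⋯ r_j exp(−πλ r_j²) with respect to Lebesgue measure. For positive r₁ < ⋯ < r_j, let K̃(r₁,…,r_j) be the unique positive real x with exp(−s(r_j) x) = γ (1 + θ (Σ_{k=1}^{j} r_k^{−α}) x). Then μ_j of the event {(r₀,…,r_j) : exp(−s(r_j) r₀^α) > γ (1 + θ r₀^α Σ_{k=1}^{j} r_k^{−α})} equals the integral over {0 < r₁ < ⋯ < r_j} of min(1, K̃(r₁,…,r_j)^{2/α} / r₁²) · 2^j (πλ)^{j+1} r₁³ r₂ ⋯ r_j exp(−πλ r_j²) with respect to dr₁ ⋯ dr_j. -/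

import Mathlib

open MeasureTheory Real Set ENNReal


theorem consSM (n : ℕ) (x : ℝ) (q : Fin (n+1) → ℝ) :
    StrictMono (Fin.cons x q : Fin (n+2) → ℝ) ↔ (x < q 0 ∧ StrictMono q) := by
  constructor
  · intro h
    refine ⟨?_, fun a b hab => ?_⟩
    · have h01 : (0 : Fin (n+2)) < Fin.succ 0 := by
        rw [Fin.lt_def]; simp
      have := h h01
      simpa using this
    · have := h (Fin.succ_lt_succ_iff.mpr hab)
      simpa using this
  · rintro ⟨h1, h2⟩
    rw [Fin.strictMono_iff_lt_succ]
    intro i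
    induction i using Fin.cases with
    | zero => simpa using h1
    | succ k =>
      have : (k.succ.castSucc : Fin (n+2)) = (k.castSucc).succ := rfl
      rw [this, Fin.cons_succ, Fin.cons_succ]
      exact h2 Fin.castSucc_lt_succ

theorem inner_calc (c M : ℝ) (hc : 0 ≤ c) (hM : 0 ≤ M) :
    ∫⁻ x in Ioo 0 M, ENNReal.ofReal (c * x) = ENNReal.ofReal (c * M ^ 2 / 2) := by
  have hint : IntegrableOn (fun x : ℝ => c * x) (Ioo 0 M) :=
    ((continuous_const.mul continuous_id).integrableOn_Icc (a := 0) (b := M)).mono_set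
      Ioo_subset_Icc_self
  rw [← ofReal_integral_eq_lintegral_ofReal hint]
  · congr 1
    rw [← integral_Ioc_eq_integral_Ioo, ← intervalIntegral.integral_of_le hM,
      intervalIntegral.integral_const_mul, integral_id]
    ring
  · filter_upwards [ae_restrict_mem measurableSet_Ioo] with x hx
    exact mul_nonneg hc hx.1.le

theorem event_iff (a b K γ : ℝ) (ha : 0 < a) (hb : 0 < b) (hγ0 : 0 < γ)
    (hK : Real.exp (-(a * K)) = γ * (1 + b * K)) :
    ∀ t : ℝ, (γ * (1 + b * t) < Real.exp (-(a * t)) ↔ t < K) := by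
  have hanti : StrictAnti (fun u : ℝ => Real.exp (-(a * u)) - γ * (1 + b * u)) := by
    have h1 : StrictAnti (fun u : ℝ => Real.exp (-(a * u))) :=
      Real.exp_strictMono.comp_strictAnti (fun u v huv => by nlinarith)
    have h2 : StrictAnti (fun u : ℝ => -(γ * (1 + b * u))) := by
      intro u v huv
      have := mul_lt_mul_of_pos_left huv (mul_pos hγ0 hb)
      simp only; nlinarith
    have := h1.add h2
    simpa [sub_eq_add_neg] using this
  intro t
  constructor
  · intro h
    by_contra hle
    push_neg at hle
    rcases eq_or_lt_of_le hle with h' | h'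
    · rw [h'] at hK; linarith [hK]
    · have := hanti h'
      simp only at this
      rw [hK] at this
      linarith
  · intro h
    have := hanti h
    simp only at this
    rw [hK] at this
    linarith

/-- Theorem 3 of the paper (j-th nearest interferer approximation of the SINR meta
distribution), as an exact measure identity.  `μ_j` is the joint law of the ordered
distances `R₀ < R₁ < ⋯ < R_j` (density `(2πλ)^{j+1} r₀⋯r_j e^{−πλ r_j²}` on the ordered
simplex), `G` is the conditional mean residual interference, `s r = (θ/p_t)(p_t G r + σ²)`,
and `Kt (r₁,…,r_j)` is the unique positive solution `x` of
`exp(−s(r_j)x) = γ(1 + θ (Σ_k r_k^{−α}) x)`.  Then the `μ_j`-measure of the success event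
equals the integral of `F_{R₀|R₁}(Kt^{1/α} | r₁) = min(1, Kt^{2/α}/r₁²)` against the joint
density `2^j (πλ)^{j+1} r₁³ r₂⋯r_j e^{−πλ r_j²}` of `(R₁,…,R_j)`. -/
theorem stmt6 (j : ℕ) (hj : 1 ≤ j) (lam α θ pt σ2 γ : ℝ)
    (hlam : 0 < lam) (hα : 2 < α) (hθ : 0 < θ) (hpt : 0 < pt) (hσ : 0 ≤ σ2)
    (hγ0 : 0 < γ) (hγ1 : γ < 1)
    (G s : ℝ → ℝ)
    (hG : ∀ r, G r = 2 * π * lam * r ^ (2 - α) / (α - 2))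
    (hs : ∀ r, s r = θ / pt * (pt * G r + σ2))
    (Kt : (Fin j → ℝ) → ℝ)
    (hKt : ∀ q : Fin j → ℝ, (∀ k, 0 < q k) → StrictMono q →
      0 < Kt q ∧
        Real.exp (-(s (q ⟨j - 1, by omega⟩) * Kt q))
          = γ * (1 + θ * (∑ k : Fin j, q k ^ (-α)) * Kt q)) :
    (Measure.withDensity
        ((volume : Measure (Fin (j + 1) → ℝ)).restrict
          {r : Fin (j + 1) → ℝ | 0 < r 0 ∧ StrictMono r})
        fun r => ENNReal.ofReal
          ((2 * π * lam) ^ (j + 1) * (∏ i, r i) * Real.exp (-(π * lam * (r (Fin.last j)) ^ 2))))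
      {r : Fin (j + 1) → ℝ |
        γ * (1 + θ * r 0 ^ α * ∑ k : Fin j, (r k.succ) ^ (-α))
          < Real.exp (-(s (r (Fin.last j)) * r 0 ^ α))}
      = ∫⁻ q in {q : Fin j → ℝ | 0 < q ⟨0, by omega⟩ ∧ StrictMono q},
          ENNReal.ofReal
            (min 1 (Kt q ^ (2 / α) / (q ⟨0, by omega⟩) ^ 2) *
              (2 ^ j * (π * lam) ^ (j + 1) * (q ⟨0, by omega⟩) ^ 2 * (∏ k, q k) *
                Real.exp (-(π * lam * (q ⟨j - 1, by omega⟩) ^ 2)))) := by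
  obtain ⟨n, rfl⟩ : ∃ n, j = n + 1 := ⟨j - 1, by omega⟩
  -- abbreviations
  set f : (Fin (n + 2) → ℝ) → ℝ≥0∞ := fun r => ENNReal.ofReal
      ((2 * π * lam) ^ (n + 2) * (∏ i, r i) *
        Real.exp (-(π * lam * (r (Fin.last (n + 1))) ^ 2))) with hf_def
  set A : Set (Fin (n + 2) → ℝ) := {r | 0 < r 0 ∧ StrictMono r} with hA_def
  set E : Set (Fin (n + 2) → ℝ) := {r |
      γ * (1 + θ * r 0 ^ α * ∑ k : Fin (n + 1), (r k.succ) ^ (-α))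
        < Real.exp (-(s (r (Fin.last (n + 1))) * r 0 ^ α))} with hE_def
  have hsfun : s = fun r => θ / pt * (pt * (2 * π * lam * r ^ (2 - α) / (α - 2)) + σ2) := by
    funext r; rw [hs, hG]
  -- measurability
  have hmono_meas : ∀ m : ℕ, MeasurableSet {r : Fin (m + 1) → ℝ | StrictMono r} := by
    intro m
    have : {r : Fin (m + 1) → ℝ | StrictMono r} =
        ⋂ i : Fin m, {r | r i.castSucc < r i.succ} := by
      ext r; simp [Fin.strictMono_iff_lt_succ, Set.mem_iInter]
    rw [this]
    exact MeasurableSet.iInter fun i =>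
      measurableSet_lt (measurable_pi_apply _) (measurable_pi_apply _)
  have hA : MeasurableSet A := by
    apply MeasurableSet.inter
    · exact measurableSet_lt measurable_const (measurable_pi_apply 0)
    · exact hmono_meas (n + 1)
  have hE : MeasurableSet E := by
    apply measurableSet_lt
    · apply Measurable.const_mul
      apply Measurable.add measurable_const
      apply Measurable.mul
      · exact (measurable_const.mul ((measurable_pi_apply 0).pow_const α))
      · exact Finset.measurable_sum _ fun k _ => (measurable_pi_apply k.succ).pow_const (-α)
    · apply Measurable.exp
      apply Measurable.neg
      apply Measurable.mul
      · rw [hsfun]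
        fun_prop
      · exact (measurable_pi_apply 0).pow_const α
  have hf : Measurable f := by
    apply ENNReal.measurable_ofReal.comp
    apply Measurable.mul
    · exact measurable_const.mul (Finset.measurable_prod _ fun i _ => measurable_pi_apply i)
    · apply Measurable.exp
      apply Measurable.neg
      exact (measurable_const.mul ((measurable_pi_apply _).pow measurable_const))
  -- unfold the withDensity measure
  rw [withDensity_apply _ hE, Measure.restrict_restrict hE,
    ← lintegral_indicator (hE.inter hA)]
  -- transfer to the product space
  have hmp := volume_preserving_piFinSuccAbove (fun _ : Fin (n + 2) => ℝ) 0
  set e := MeasurableEquiv.piFinSuccAbove (fun _ : Fin (n + 2) => ℝ) 0 with he_def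
  have hF : Measurable ((E ∩ A).indicator f) := hf.indicator (hE.inter hA)
  set Fq : ℝ × (Fin (n + 1) → ℝ) → ℝ≥0∞ := fun p => (E ∩ A).indicator f (e.symm p) with hFq_def
  have hFq : Measurable Fq := hF.comp e.symm.measurable
  have step1 : ∫⁻ r, (E ∩ A).indicator f r = ∫⁻ p, Fq p := by
    rw [← hmp.lintegral_comp hFq]
    refine lintegral_congr fun r => ?_
    simp [hFq_def]
  rw [step1, MeasureTheory.Measure.volume_eq_prod, lintegral_prod_symm Fq hFq.aemeasurable]
  have hcons : ∀ (x : ℝ) (q : Fin (n + 1) → ℝ), e.symm (x, q) = Fin.cons x q := by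
    intro x q
    simp [he_def, MeasurableEquiv.piFinSuccAbove, Fin.insertNthEquiv_zero, Fin.consEquiv]
  -- the per-q computation
  have key : ∀ q : Fin (n + 1) → ℝ,
      (∫⁻ x, Fq (x, q)) =
      Set.indicator {q : Fin (n + 1) → ℝ | 0 < q ⟨0, by omega⟩ ∧ StrictMono q}
        (fun q => ENNReal.ofReal
          (min 1 (Kt q ^ (2 / α) / (q ⟨0, by omega⟩) ^ 2) *
            (2 ^ (n + 1) * (π * lam) ^ (n + 2) * (q ⟨0, by omega⟩) ^ 2 * (∏ k, q k) *
              Real.exp (-(π * lam * (q ⟨n + 1 - 1, by omega⟩) ^ 2))))) q := by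
    intro q
    have hzero : (⟨0, by omega⟩ : Fin (n + 1)) = 0 := by ext; simp
    have hlast : (⟨n + 1 - 1, by omega⟩ : Fin (n + 1)) = Fin.last n := rfl
    have hconsq : ∀ x : ℝ, Fq (x, q) = (E ∩ A).indicator f (Fin.cons x q) := by
      intro x; rw [hFq_def]; simp only; rw [hcons]
    have hconslast : ∀ x : ℝ, (Fin.cons x q : Fin (n + 2) → ℝ) (Fin.last (n + 1)) =
        q (Fin.last n) := by
      intro x; rw [← Fin.succ_last, Fin.cons_succ]
    by_cases hq : 0 < q ⟨0, by omega⟩ ∧ StrictMono q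
    · obtain ⟨hq0, hqm⟩ := hq
      rw [hzero] at hq0
      have hqpos : ∀ k, 0 < q k := fun k => lt_of_lt_of_le hq0 (hqm.monotone (Fin.zero_le k))
      obtain ⟨hKpos, hKeq⟩ := hKt q hqpos hqm
      set k0 := Kt q with hk0
      set S' : ℝ := ∑ i : Fin (n + 1), q i ^ (-α) with hS'
      have hS'pos : 0 < S' :=
        Finset.sum_pos (fun i _ => Real.rpow_pos_of_pos (hqpos i) _) ⟨0, Finset.mem_univ 0⟩
      have hGpos : 0 < G (q (Fin.last n)) := by
        rw [hG]
        apply div_pos _ (by linarith)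
        have := Real.rpow_pos_of_pos (hqpos (Fin.last n)) (2 - α)
        have hπ := Real.pi_pos
        positivity
      have hspos : 0 < s (q (Fin.last n)) := by
        rw [hs]
        have := mul_pos hpt hGpos
        apply mul_pos (div_pos hθ hpt)
        linarith
      have hKeq' : Real.exp (-(s (q (Fin.last n)) * k0)) = γ * (1 + θ * S' * k0) := hKeq
      have hevent := event_iff (s (q (Fin.last n))) (θ * S') k0 γ hspos
        (mul_pos hθ hS'pos) hγ0 hKeq'
      set m : ℝ := k0 ^ α⁻¹ with hm
      have hmpos : 0 < m := Real.rpow_pos_of_pos hKpos _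
      have hmα : m ^ α = k0 := Real.rpow_inv_rpow hKpos.le (by linarith)
      set M : ℝ := min (q 0) m with hM
      have hMpos : 0 < M := lt_min hq0 hmpos
      -- membership characterization
      have hmem : ∀ x : ℝ, (Fin.cons x q ∈ E ∩ A) ↔ x ∈ Ioo 0 M := by
        intro x
        have hsum : ∑ k : Fin (n + 1), ((Fin.cons x q : Fin (n + 2) → ℝ) k.succ) ^ (-α) = S' := by
          rw [hS']; exact Finset.sum_congr rfl fun k _ => by rw [Fin.cons_succ]
        constructor
        · rintro ⟨hEmem, hAmem⟩
          have hAx : 0 < x ∧ x < q 0 ∧ StrictMono q := by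
            obtain ⟨h1, h2⟩ := hAmem
            rw [Fin.cons_zero] at h1
            exact ⟨h1, (consSM n x q).1 h2⟩
          have hEx : γ * (1 + θ * S' * x ^ α) <
              Real.exp (-(s (q (Fin.last n)) * x ^ α)) := by
            have := hEmem
            simp only [hE_def, Set.mem_setOf_eq, Fin.cons_zero, hsum, hconslast] at this
            calc γ * (1 + θ * S' * x ^ α) = γ * (1 + θ * x ^ α * S') := by ring
              _ < _ := this
          have hxα : x ^ α < k0 := (hevent (x ^ α)).1 hEx
          have hxm : x < m := by
            by_contra hxm
            push_neg at hxm
            have : m ^ α ≤ x ^ α := Real.rpow_le_rpow (z := α) hmpos.le hxm (by linarith)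
            rw [hmα] at this; linarith
          exact ⟨hAx.1, lt_min hAx.2.1 hxm⟩
        · rintro ⟨hx0, hxM⟩
          have hxq0 : x < q 0 := lt_of_lt_of_le hxM (min_le_left _ _)
          have hxm : x < m := lt_of_lt_of_le hxM (min_le_right _ _)
          have hxα : x ^ α < k0 := by
            have := Real.rpow_lt_rpow (z := α) hx0.le hxm (by linarith)
            rwa [hmα] at this
          refine ⟨?_, ?_⟩
          · simp only [hE_def, Set.mem_setOf_eq, Fin.cons_zero, hsum, hconslast]
            calc γ * (1 + θ * x ^ α * S') = γ * (1 + θ * S' * x ^ α) := by ring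
              _ < _ := (hevent (x ^ α)).2 hxα
          · exact ⟨by rw [Fin.cons_zero]; exact hx0, (consSM n x q).2 ⟨hxq0, hqm⟩⟩
      -- the constant
      set c : ℝ := (2 * π * lam) ^ (n + 2) * (∏ i, q i) *
          Real.exp (-(π * lam * (q (Fin.last n)) ^ 2)) with hc_def
      have hprodq : 0 < ∏ i, q i := Finset.prod_pos fun i _ => hqpos i
      have hcpos : 0 < c := by
        have hπ := Real.pi_pos
        have : (0:ℝ) < (2 * π * lam) ^ (n + 2) := by positivity
        exact mul_pos (mul_pos this hprodq) (Real.exp_pos _)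
      have hstep : (∫⁻ x, Fq (x, q)) =
          ∫⁻ x, (Ioo 0 M).indicator (fun x => ENNReal.ofReal (c * x)) x := by
        refine lintegral_congr fun x => ?_
        rw [hconsq]
        by_cases hx : Fin.cons x q ∈ E ∩ A
        · rw [Set.indicator_of_mem hx, Set.indicator_of_mem ((hmem x).1 hx)]
          simp only [hf_def]
          congr 1
          rw [Fin.prod_cons, hconslast, hc_def]
          ring
        · rw [Set.indicator_of_notMem hx,
            Set.indicator_of_notMem (fun hc' => hx ((hmem x).2 hc'))]
      rw [hstep, lintegral_indicator measurableSet_Ioo, inner_calc c M hcpos.le hMpos.le,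
        Set.indicator_of_mem (show q ∈ {q : Fin (n+1) → ℝ | 0 < q ⟨0, by omega⟩ ∧ StrictMono q}
          from ⟨by rw [hzero]; exact hq0, hqm⟩)]
      congr 1
      -- real computation
      have hm2 : m ^ 2 = k0 ^ (2 / α) := by
        rw [hm, ← Real.rpow_natCast (k0 ^ α⁻¹) 2, ← Real.rpow_mul hKpos.le]
        congr 1
        push_cast
        ring
      have hM2 : M ^ 2 = min ((q 0) ^ 2) (k0 ^ (2 / α)) := by
        rw [← hm2, hM]
        rcases le_total (q 0) m with h | h
        · rw [min_eq_left h, min_eq_left (by nlinarith)]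
        · rw [min_eq_right h, min_eq_right (by nlinarith)]
      have hq0sq : (0:ℝ) < (q 0) ^ 2 := by positivity
      have h1 : min 1 (k0 ^ (2 / α) / (q 0) ^ 2) * (q 0) ^ 2
          = min ((q 0) ^ 2) (k0 ^ (2 / α)) := by
        rw [min_mul_of_nonneg _ _ hq0sq.le, one_mul, div_mul_cancel₀ _ (ne_of_gt hq0sq)]
      have h2pow : ((2:ℝ) * π * lam) ^ (n + 2) = 2 * (2 ^ (n + 1) * (π * lam) ^ (n + 2)) := by
        have : (2:ℝ) * π * lam = 2 * (π * lam) := by ring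
        rw [this, mul_pow, pow_succ]
        ring
      rw [hzero, hlast]
      rw [hc_def, hM2, ← h1, h2pow]
      ring
    · rw [Set.indicator_of_notMem
        (show q ∉ {q : Fin (n+1) → ℝ | 0 < q ⟨0, by omega⟩ ∧ StrictMono q} from hq)]
      have hzero' : ∀ x : ℝ, Fq (x, q) = 0 := by
        intro x
        rw [hconsq]
        apply Set.indicator_of_notMem
        rintro ⟨-, h0, hSM⟩
        rw [Fin.cons_zero] at h0
        obtain ⟨hlt, hSM'⟩ := (consSM n x q).1 hSM
        exact hq ⟨by rw [hzero]; exact lt_trans h0 hlt, hSM'⟩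
      simp only [hzero']
      simp
  rw [lintegral_congr key,
    lintegral_indicator (by
      apply MeasurableSet.inter
      · exact measurableSet_lt measurable_const (measurable_pi_apply _)
      · exact hmono_meas n)]
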